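/- For probability mass functions P, Q on a finite set, exp(−KL(P‖Q)) ≤ 2·(1 − TV(P,Q)), i.e., 1 − TV(P,Q) ≥ (1/2)exp(−KL(P‖Q)) (Bretagnolle–Huber inequality). -/

import Mathlib

open Finset Real

theorem bretagnolle_huber
    {A : Type*} [Fintype A] [Nonempty A]
    (P Q : A → ℝ)
    (hP_nonneg : ∀ a, 0 ≤ P a) (hP_sum : ∑ a, P a = 1)
    (hQ_nonneg : ∀ a, 0 ≤ Q a) (hQ_sum : ∑ a, Q a = 1)
    (habs : ∀ a, Q a = 0 → P a = 0) :
    Real.exp (-(∑ a, P a * Real.log (P a / Q a))) ≤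
      2 * (1 - (1 / 2) * ∑ a, |P a - Q a|) := by
  set T : ℝ := ∑ a, |P a - Q a| with hT
  set K : ℝ := ∑ a, P a * Real.log (P a / Q a) with hK
  -- Jensen: exp(-K/2) ≤ ∑ √(P a * Q a)
  have hjensen :
      Real.exp (∑ a, P a • ((1/2) * Real.log (Q a / P a))) ≤
        ∑ a, P a * Real.exp ((1/2) * Real.log (Q a / P a)) := by
    have := convexOn_exp.map_sum_le (t := Finset.univ)
      (w := fun a => P a) (p := fun a => (1/2) * Real.log (Q a / P a))
      (fun a _ => hP_nonneg a) hP_sum (fun a _ => Set.mem_univ _)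
    simpa [smul_eq_mul] using this
  have hsum_eq : ∑ a, P a • ((1/2) * Real.log (Q a / P a)) = -(1/2) * K := by
    rw [hK, Finset.mul_sum]
    refine Finset.sum_congr rfl fun a _ => ?_
    rcases eq_or_lt_of_le (hP_nonneg a) with h0 | hPa
    · simp [← h0]
    · have hQa : 0 < Q a := by
        rcases eq_or_lt_of_le (hQ_nonneg a) with h | h
        · exact absurd (habs a h.symm) (ne_of_gt hPa)
        · exact h
      have : Real.log (Q a / P a) = - Real.log (P a / Q a) := by
        rw [← Real.log_inv, inv_div]
      rw [smul_eq_mul, this]; ring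
  have hRHS_eq : ∑ a, P a * Real.exp ((1/2) * Real.log (Q a / P a))
      = ∑ a, Real.sqrt (P a * Q a) := by
    refine Finset.sum_congr rfl fun a _ => ?_
    rcases eq_or_lt_of_le (hP_nonneg a) with h0 | hPa
    · simp [← h0]
    · have hQa : 0 < Q a := by
        rcases eq_or_lt_of_le (hQ_nonneg a) with h | h
        · exact absurd (habs a h.symm) (ne_of_gt hPa)
        · exact h
      have hpos : 0 < Q a / P a := div_pos hQa hPa
      have : Real.exp ((1/2) * Real.log (Q a / P a)) = Real.sqrt (Q a / P a) := by
        rw [Real.sqrt_eq_rpow, Real.rpow_def_of_pos hpos, mul_comm]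
      rw [this, show P a * Q a = (P a)^2 * (Q a / P a) by field_simp,
        Real.sqrt_mul (sq_nonneg _), Real.sqrt_sq (hP_nonneg a)]
  have hstep1 : Real.exp (-(1/2) * K) ≤ ∑ a, Real.sqrt (P a * Q a) := by
    rw [← hsum_eq, ← hRHS_eq]; exact hjensen
  -- Cauchy–Schwarz
  have hCS : (∑ a, Real.sqrt (P a * Q a)) ^ 2 ≤
      (∑ a, min (P a) (Q a)) * (∑ a, max (P a) (Q a)) := by
    have h1 : ∀ a : A, Real.sqrt (P a * Q a) =
        Real.sqrt (min (P a) (Q a)) * Real.sqrt (max (P a) (Q a)) := by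
      intro a
      rw [← Real.sqrt_mul (le_min (hP_nonneg a) (hQ_nonneg a)), min_mul_max]
    calc (∑ a, Real.sqrt (P a * Q a)) ^ 2
        = (∑ a, Real.sqrt (min (P a) (Q a)) * Real.sqrt (max (P a) (Q a))) ^ 2 := by
          simp_rw [h1]
      _ ≤ (∑ a, Real.sqrt (min (P a) (Q a)) ^ 2) * ∑ a, Real.sqrt (max (P a) (Q a)) ^ 2 :=
          Finset.sum_mul_sq_le_sq_mul_sq _ _ _
      _ = (∑ a, min (P a) (Q a)) * (∑ a, max (P a) (Q a)) := by
          congr 1 <;> refine Finset.sum_congr rfl fun a _ => Real.sq_sqrt ?_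
          · exact le_min (hP_nonneg a) (hQ_nonneg a)
          · exact le_max_of_le_left (hP_nonneg a)
  have hmin : ∑ a, min (P a) (Q a) = 1 - (1/2) * T := by
    have : ∀ a : A, min (P a) (Q a) = (P a + Q a - |P a - Q a|) / 2 := by
      intro a
      have h1 := min_add_max (P a) (Q a)
      have h2 := max_sub_min_eq_abs (P a) (Q a)
      rw [abs_sub_comm]
      linarith
    simp_rw [this]
    rw [← Finset.sum_div, Finset.sum_sub_distrib, Finset.sum_add_distrib, hP_sum, hQ_sum, ← hT]
    ring
  have hmax : ∑ a, max (P a) (Q a) = 1 + (1/2) * T := by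
    have : ∀ a : A, max (P a) (Q a) = (P a + Q a + |P a - Q a|) / 2 := by
      intro a
      have h1 := min_add_max (P a) (Q a)
      have h2 := max_sub_min_eq_abs (P a) (Q a)
      rw [abs_sub_comm]
      linarith
    simp_rw [this]
    rw [← Finset.sum_div, Finset.sum_add_distrib, Finset.sum_add_distrib, hP_sum, hQ_sum, ← hT]
    ring
  have hT2 : T ≤ 2 := by
    have : ∀ a : A, |P a - Q a| ≤ P a + Q a := fun a =>
      (abs_sub _ _).trans (by rw [abs_of_nonneg (hP_nonneg a), abs_of_nonneg (hQ_nonneg a)])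
    calc T ≤ ∑ a, (P a + Q a) := Finset.sum_le_sum fun a _ => this a
      _ = 2 := by rw [Finset.sum_add_distrib, hP_sum, hQ_sum]; norm_num
  have hT0 : 0 ≤ 1 - (1/2) * T := by
    rw [← hmin]; exact Finset.sum_nonneg fun a _ => le_min (hP_nonneg a) (hQ_nonneg a)
  have hfinal : Real.exp (-K) ≤ (1 - (1/2) * T) * (1 + (1/2) * T) := by
    have : Real.exp (-K) = Real.exp (-(1/2) * K) ^ 2 := by
      rw [← Real.exp_nat_mul]; congr 1; push_cast; ring
    rw [this, ← hmin, ← hmax]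
    exact (pow_le_pow_left₀ (Real.exp_pos _).le hstep1 2).trans hCS
  calc Real.exp (-K) ≤ (1 - (1/2) * T) * (1 + (1/2) * T) := hfinal
    _ ≤ 2 * (1 - (1/2) * T) := by nlinarith
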